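/- With S_{b,B}[P](A,N) defined as the weighted sum over partitions b + b_1 + ... + b_k = N (b ≥ 0 with the boundary term b = 0 weighted by 1/2, b_i ≥ 1, weight ∏b_i·P(A,b,B)), one has S_{b,B}[P](A,0) = 0, and S_{b,B}[P](A,N) agrees with a polynomial in a_1,...,a_n, N of degree at most 2k + deg P. -/

import Mathlib

open MvPolynomial

/-- The sum `S_{b,B}[P](A,N)`: variables indexed by `Fin n ⊕ (Unit ⊕ Fin k)` as in the paper,
with the `Unit` part the variable `b`. -/
noncomputable def Ssum (n k : ℕ) (P : MvPolynomial (Fin n ⊕ (Unit ⊕ Fin k)) ℂ)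
    (A : Fin n → ℂ) (N : ℕ) : ℂ :=
  (∑ t ∈ (Finset.Nat.antidiagonalTuple (k + 1) N).filter fun t => ∀ i, 1 ≤ t i,
      MvPolynomial.eval
        (Sum.elim A (Sum.elim (fun _ => ((t 0 : ℂ))) fun i => ((t i.succ : ℂ)))) P *
        ∏ i : Fin k, (t i.succ : ℂ)) +
    (1 / 2 : ℂ) *
      ∑ t ∈ (Finset.Nat.antidiagonalTuple k N).filter fun t => ∀ i, 1 ≤ t i,
        MvPolynomial.eval (Sum.elim A (Sum.elim (fun _ => (0 : ℂ)) fun i => ((t i : ℂ)))) P *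
          ∏ i : Fin k, (t i : ℂ)

namespace SsumAux

/-- `f : ℕ → ℂ` agrees with a polynomial of degree at most `d`. -/
def IsPolyFun (d : ℕ) (f : ℕ → ℂ) : Prop :=
  ∃ p : Polynomial ℂ, p.natDegree ≤ d ∧ ∀ N : ℕ, p.eval (N : ℂ) = f N

lemma IsPolyFun.mono {d d' : ℕ} {f : ℕ → ℂ} (h : IsPolyFun d f) (hd : d ≤ d') :
    IsPolyFun d' f := by
  obtain ⟨p, hp, he⟩ := h; exact ⟨p, hp.trans hd, he⟩

lemma IsPolyFun.congr {d : ℕ} {f g : ℕ → ℂ} (h : IsPolyFun d f) (hfg : ∀ N, f N = g N) :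
    IsPolyFun d g := by
  obtain ⟨p, hp, he⟩ := h; exact ⟨p, hp, fun N => (he N).trans (hfg N)⟩

lemma isPolyFun_const (c : ℂ) : IsPolyFun 0 (fun _ => c) :=
  ⟨Polynomial.C c, by simp, by simp⟩

lemma isPolyFun_pow (m : ℕ) : IsPolyFun m (fun N => (N : ℂ) ^ m) :=
  ⟨Polynomial.X ^ m, by simp, by simp⟩

lemma IsPolyFun.add {d : ℕ} {f g : ℕ → ℂ} (hf : IsPolyFun d f) (hg : IsPolyFun d g) :
    IsPolyFun d (fun N => f N + g N) := by
  obtain ⟨p, hp, hpe⟩ := hf; obtain ⟨q, hq, hqe⟩ := hg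
  exact ⟨p + q, (Polynomial.natDegree_add_le p q).trans (by simp [hp, hq]),
    fun N => by simp [hpe N, hqe N]⟩

lemma IsPolyFun.mul {d e : ℕ} {f g : ℕ → ℂ} (hf : IsPolyFun d f) (hg : IsPolyFun e g) :
    IsPolyFun (d + e) (fun N => f N * g N) := by
  obtain ⟨p, hp, hpe⟩ := hf; obtain ⟨q, hq, hqe⟩ := hg
  exact ⟨p * q, (Polynomial.natDegree_mul_le).trans (by omega),
    fun N => by simp [hpe N, hqe N]⟩

lemma IsPolyFun.constMul {d : ℕ} {f : ℕ → ℂ} (hf : IsPolyFun d f) (c : ℂ) :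
    IsPolyFun d (fun N => c * f N) :=
  ((isPolyFun_const c).mul hf).mono (by omega)

lemma IsPolyFun.sub {d : ℕ} {f g : ℕ → ℂ} (hf : IsPolyFun d f) (hg : IsPolyFun d g) :
    IsPolyFun d (fun N => f N - g N) := by
  have := hf.add (hg.constMul (-1))
  exact this.congr (fun N => by ring)

lemma IsPolyFun.sum {ι : Type*} (s : Finset ι) (F : ι → ℕ → ℂ) (d : ℕ)
    (h : ∀ i ∈ s, IsPolyFun d (F i)) : IsPolyFun d (fun N => ∑ i ∈ s, F i N) := by
  classical
  induction s using Finset.induction with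
  | empty => exact (isPolyFun_const 0).mono (by omega) |>.congr (by simp)
  | insert a s hx ih =>
    have h1 := h a (Finset.mem_insert_self a s)
    have h2 := ih fun i hi => h i (Finset.mem_insert_of_mem hi)
    exact (h1.add h2).congr (fun N => by rw [Finset.sum_insert hx])

/-- Faulhaber: the power sums are polynomial. -/
lemma isPolyFun_sum_range_pow (m : ℕ) :
    IsPolyFun (m + 1) (fun N => ∑ x ∈ Finset.range N, (x : ℂ) ^ m) := by
  set q : Polynomial ℚ := ∑ i ∈ Finset.range (m + 1),
    Polynomial.C (bernoulli i * ((m + 1).choose i) / (m + 1)) * Polynomial.X ^ (m + 1 - i) with hq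
  have hdeg : q.natDegree ≤ m + 1 := by
    apply Polynomial.natDegree_sum_le_of_forall_le
    intro i _
    exact (Polynomial.natDegree_C_mul_le _ _).trans (by simp)
  have heval : ∀ N : ℕ, q.eval (N : ℚ) = ∑ x ∈ Finset.range N, (x : ℚ) ^ m := by
    intro N
    rw [sum_range_pow N m, hq]
    simp only [Polynomial.eval_finset_sum, Polynomial.eval_mul, Polynomial.eval_C,
      Polynomial.eval_pow, Polynomial.eval_X]
    exact Finset.sum_congr rfl fun i _ => by ring
  refine ⟨q.map (algebraMap ℚ ℂ), (Polynomial.natDegree_map_le).trans hdeg, fun N => ?_⟩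
  have h1 : (q.map (algebraMap ℚ ℂ)).eval ((N : ℕ) : ℂ) = algebraMap ℚ ℂ (q.eval (N : ℚ)) := by
    rw [Polynomial.eval_map, Polynomial.eval₂_at_natCast]
  rw [h1, heval N, map_sum]
  push_cast
  rfl


lemma IsPolyFun.sumRange {d : ℕ} {f : ℕ → ℂ} (h : IsPolyFun d f) :
    IsPolyFun (d + 1) (fun N => ∑ x ∈ Finset.range N, f x) := by
  obtain ⟨p, hp, he⟩ := h
  have key : ∀ N : ℕ, ∑ x ∈ Finset.range N, f x
      = ∑ j ∈ Finset.range (d + 1), p.coeff j * ∑ x ∈ Finset.range N, (x : ℂ) ^ j := by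
    intro N
    calc ∑ x ∈ Finset.range N, f x
        = ∑ x ∈ Finset.range N, ∑ j ∈ Finset.range (d + 1), p.coeff j * (x : ℂ) ^ j := by
          refine Finset.sum_congr rfl fun x _ => ?_
          rw [← he x, Polynomial.eval_eq_sum_range' (by omega : p.natDegree < d + 1)]
      _ = _ := by
          rw [Finset.sum_comm]
          exact Finset.sum_congr rfl fun j _ => by rw [Finset.mul_sum]
  refine (IsPolyFun.sum (Finset.range (d + 1))
    (fun j N => p.coeff j * ∑ x ∈ Finset.range N, (x : ℂ) ^ j) (d + 1)
    (fun j hj => ((isPolyFun_sum_range_pow j).constMul (p.coeff j)).mono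
      (by simp at hj; omega))).congr (fun N => (key N).symm)

lemma IsPolyFun.sumRangeSucc {d : ℕ} {f : ℕ → ℂ} (h : IsPolyFun d f) :
    IsPolyFun (d + 1) (fun N => ∑ x ∈ Finset.range (N + 1), f x) := by
  obtain ⟨p, hp, he⟩ := h.sumRange
  refine ⟨p.comp (Polynomial.X + Polynomial.C 1), ?_, fun N => ?_⟩
  · refine (Polynomial.natDegree_comp_le).trans ?_
    have : (Polynomial.X + Polynomial.C 1 : Polynomial ℂ).natDegree ≤ 1 := by
      exact (Polynomial.natDegree_add_le _ _).trans (by simp)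
    calc p.natDegree * (Polynomial.X + Polynomial.C 1 : Polynomial ℂ).natDegree
        ≤ (d+1) * 1 := Nat.mul_le_mul hp this
      _ = d + 1 := by ring
  · rw [Polynomial.eval_comp]
    have := he (N + 1)
    simpa using this

lemma conv_pow {d : ℕ} {f : ℕ → ℂ} (h : IsPolyFun d f) (j : ℕ) :
    IsPolyFun (d + j + 1)
      (fun N => ∑ x ∈ Finset.range (N + 1), f x * ((N : ℂ) - (x : ℂ)) ^ j) := by
  have key : ∀ N : ℕ, ∑ x ∈ Finset.range (N + 1), f x * ((N : ℂ) - (x : ℂ)) ^ j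
      = ∑ i ∈ Finset.range (j + 1), ((-1) ^ (j - i) * (j.choose i) : ℂ) *
          ((N : ℂ) ^ i * ∑ x ∈ Finset.range (N + 1), f x * (x : ℂ) ^ (j - i)) := by
    intro N
    have expand : ∀ x : ℕ, ((N : ℂ) - (x : ℂ)) ^ j
        = ∑ i ∈ Finset.range (j + 1), (N : ℂ) ^ i * (-(x:ℂ)) ^ (j - i) * (j.choose i) := by
      intro x
      rw [sub_eq_add_neg, add_pow]
    simp only [expand]
    calc ∑ x ∈ Finset.range (N + 1), f x *
            ∑ i ∈ Finset.range (j + 1), (N : ℂ) ^ i * (-(x:ℂ)) ^ (j - i) * (j.choose i)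
        = ∑ x ∈ Finset.range (N + 1), ∑ i ∈ Finset.range (j + 1),
            ((-1) ^ (j - i) * (j.choose i) : ℂ) * ((N : ℂ) ^ i * (f x * (x : ℂ) ^ (j - i))) := by
          refine Finset.sum_congr rfl fun x _ => ?_
          rw [Finset.mul_sum]
          refine Finset.sum_congr rfl fun i _ => ?_
          rw [neg_pow]
          ring
      _ = _ := by
          rw [Finset.sum_comm]
          simp only [Finset.mul_sum]
  have main : ∀ i ∈ Finset.range (j + 1), IsPolyFun (d + j + 1)
      (fun N => ((-1) ^ (j - i) * (j.choose i) : ℂ) *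
        ((N : ℂ) ^ i * ∑ x ∈ Finset.range (N + 1), f x * (x : ℂ) ^ (j - i))) := by
    intro i hi
    simp only [Finset.mem_range] at hi
    have h1 : IsPolyFun (d + (j - i)) (fun x => f x * (x : ℂ) ^ (j - i)) :=
      h.mul (isPolyFun_pow (j - i))
    have h2 := h1.sumRangeSucc
    have h3 := (isPolyFun_pow i).mul h2
    exact (h3.constMul _).mono (by omega)
  exact (IsPolyFun.sum _ _ _ main).congr (fun N => (key N).symm)

lemma conv {d₁ d₂ : ℕ} {f g : ℕ → ℂ} (hf : IsPolyFun d₁ f) (hg : IsPolyFun d₂ g) :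
    IsPolyFun (d₁ + d₂ + 1) (fun N => ∑ x ∈ Finset.range (N + 1), f x * g (N - x)) := by
  obtain ⟨p, hp, he⟩ := hg
  have key : ∀ N : ℕ, ∑ x ∈ Finset.range (N + 1), f x * g (N - x)
      = ∑ j ∈ Finset.range (d₂ + 1), p.coeff j *
          ∑ x ∈ Finset.range (N + 1), f x * ((N : ℂ) - (x : ℂ)) ^ j := by
    intro N
    have hgx : ∀ x ∈ Finset.range (N + 1), g (N - x)
        = ∑ j ∈ Finset.range (d₂ + 1), p.coeff j * ((N : ℂ) - (x : ℂ)) ^ j := by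
      intro x hx
      simp only [Finset.mem_range] at hx
      have hle : x ≤ N := by omega
      have : ((N - x : ℕ) : ℂ) = (N : ℂ) - (x : ℂ) := by
        push_cast [Nat.cast_sub hle]; ring
      rw [← he (N - x), this, Polynomial.eval_eq_sum_range' (by omega : p.natDegree < d₂ + 1)]
    calc ∑ x ∈ Finset.range (N + 1), f x * g (N - x)
        = ∑ x ∈ Finset.range (N + 1), ∑ j ∈ Finset.range (d₂ + 1),
            p.coeff j * (f x * ((N : ℂ) - (x : ℂ)) ^ j) := by
          refine Finset.sum_congr rfl fun x hx => ?_
          rw [hgx x hx, Finset.mul_sum]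
          exact Finset.sum_congr rfl fun j _ => by ring
      _ = _ := by
          rw [Finset.sum_comm]
          exact Finset.sum_congr rfl fun j _ => by rw [Finset.mul_sum]
  have main : ∀ j ∈ Finset.range (d₂ + 1), IsPolyFun (d₁ + d₂ + 1)
      (fun N => p.coeff j * ∑ x ∈ Finset.range (N + 1), f x * ((N : ℂ) - (x : ℂ)) ^ j) := by
    intro j hj
    simp only [Finset.mem_range] at hj
    exact ((conv_pow hf j).constMul _).mono (by omega)
  exact (IsPolyFun.sum _ _ _ main).congr (fun N => (key N).symm)


/-- Decomposition of a sum over `antidiagonalTuple (k+1) N`. -/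
lemma sum_adt_succ {k N : ℕ} (F : (Fin (k + 1) → ℕ) → ℂ) :
    ∑ t ∈ Finset.Nat.antidiagonalTuple (k + 1) N, F t
      = ∑ p ∈ Finset.HasAntidiagonal.antidiagonal N, ∑ s ∈ Finset.Nat.antidiagonalTuple k p.2,
          F (Fin.cons p.1 s) := by
  rw [Finset.sum_sigma' (Finset.HasAntidiagonal.antidiagonal N)
    (fun p => Finset.Nat.antidiagonalTuple k p.2) (fun p s => F (Fin.cons p.1 s))]
  refine Finset.sum_nbij'
    (fun t => ⟨(t 0, ∑ i : Fin k, t i.succ), Fin.tail t⟩)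
    (fun x => Fin.cons x.1.1 x.2) ?_ ?_ ?_ ?_ ?_
  · intro t ht
    rw [Finset.Nat.mem_antidiagonalTuple] at ht
    rw [Finset.mem_sigma]
    constructor
    · rw [Finset.HasAntidiagonal.mem_antidiagonal]
      rw [← ht, Fin.sum_univ_succ]
    · rw [Finset.Nat.mem_antidiagonalTuple]
      rfl
  · intro x hx
    rw [Finset.mem_sigma, Finset.HasAntidiagonal.mem_antidiagonal, Finset.Nat.mem_antidiagonalTuple] at hx
    rw [Finset.Nat.mem_antidiagonalTuple, Fin.sum_univ_succ]
    simp only [Fin.cons_zero, Fin.cons_succ]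
    rw [hx.2, hx.1]
  · intro t _
    exact Fin.cons_self_tail t
  · intro x hx
    rw [Finset.mem_sigma, Finset.HasAntidiagonal.mem_antidiagonal, Finset.Nat.mem_antidiagonalTuple] at hx
    obtain ⟨⟨a, b⟩, s⟩ := x
    obtain ⟨h1, h2⟩ := hx
    simp only [Finset.Nat.mem_antidiagonalTuple] at h2
    simp only [Fin.cons_zero, Fin.cons_succ, Fin.tail_cons]
    rw [h2]
  · intro t _
    rw [Fin.cons_self_tail t]

/-- The basic building block `G`. -/
noncomputable def Gfun (k : ℕ) (β : Fin k → ℕ) (N : ℕ) : ℂ :=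
  ∑ s ∈ Finset.Nat.antidiagonalTuple k N, ∏ i, (s i : ℂ) ^ (β i + 1)

lemma Gfun_succ (k : ℕ) (β : Fin (k + 1) → ℕ) (N : ℕ) :
    Gfun (k + 1) β N
      = ∑ x ∈ Finset.range (N + 1), (x : ℂ) ^ (β 0 + 1) * Gfun k (Fin.tail β) (N - x) := by
  unfold Gfun
  rw [sum_adt_succ (fun t => ∏ i, (t i : ℂ) ^ (β i + 1)),
    Finset.Nat.sum_antidiagonal_eq_sum_range_succ
      (fun a b => ∑ s ∈ Finset.Nat.antidiagonalTuple k b,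
        ∏ i, ((Fin.cons a s : Fin (k+1) → ℕ) i : ℂ) ^ (β i + 1))]
  refine Finset.sum_congr rfl fun x _ => ?_
  rw [Finset.mul_sum]
  refine Finset.sum_congr rfl fun s _ => ?_
  rw [Fin.prod_univ_succ]
  simp only [Fin.cons_zero, Fin.cons_succ]
  rfl

lemma Gfun_poly : ∀ (k : ℕ) (β : Fin (k + 1) → ℕ),
    IsPolyFun (2 * k + 1 + ∑ i, β i) (Gfun (k + 1) β) := by
  intro k
  induction k with
  | zero =>
    intro β
    have : ∀ N : ℕ, (N : ℂ) ^ (β 0 + 1) = Gfun 1 β N := by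
      intro N
      unfold Gfun
      rw [Finset.Nat.antidiagonalTuple_one, Finset.sum_singleton, Fin.prod_univ_one]
      simp
    refine ((isPolyFun_pow (β 0 + 1)).congr this).mono ?_
    rw [Fin.sum_univ_one]
    omega
  | succ k ih =>
    intro β
    have h1 := conv (isPolyFun_pow (β 0 + 1)) (ih (Fin.tail β))
    refine (h1.congr fun N => (Gfun_succ (k + 1) β N).symm).mono ?_
    have hsum : ∑ i : Fin (k + 1 + 1), β i = β 0 + ∑ i : Fin (k + 1), Fin.tail β i := by
      rw [Fin.sum_univ_succ]; rfl
    omega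

lemma Gfun_zero_eval (k : ℕ) (β : Fin (k + 1) → ℕ) : Gfun (k + 1) β 0 = 0 := by
  unfold Gfun
  rw [Finset.Nat.antidiagonalTuple_zero_right, Finset.sum_singleton]
  refine Finset.prod_eq_zero (Finset.mem_univ 0) ?_
  simp


/-- Scalar part of the contribution of a single monomial to `Ssum`. -/
noncomputable def Hfun (k e : ℕ) (β : Fin k → ℕ) (N : ℕ) : ℂ :=
  (∑ t ∈ (Finset.Nat.antidiagonalTuple (k + 1) N).filter fun t => ∀ i, 1 ≤ t i,
      (t 0 : ℂ) ^ e * ∏ i : Fin k, (t i.succ : ℂ) ^ (β i + 1)) +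
  (1 / 2 : ℂ) * ((0 : ℂ) ^ e *
    ∑ s ∈ (Finset.Nat.antidiagonalTuple k N).filter fun s => ∀ i, 1 ≤ s i,
      ∏ i : Fin k, (s i : ℂ) ^ (β i + 1))

lemma filtered_eq_Gfun (k : ℕ) (β : Fin k → ℕ) (N : ℕ) :
    ∑ s ∈ (Finset.Nat.antidiagonalTuple k N).filter fun s => ∀ i, 1 ≤ s i,
      ∏ i : Fin k, (s i : ℂ) ^ (β i + 1) = Gfun k β N := by
  apply Finset.sum_filter_of_ne
  intro s _ hne i
  by_contra h
  have hsi : s i = 0 := by omega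
  exact hne (Finset.prod_eq_zero (Finset.mem_univ i) (by simp [hsi]))

lemma F1_eq (k e : ℕ) (β : Fin k → ℕ) (N : ℕ) :
    ∑ t ∈ (Finset.Nat.antidiagonalTuple (k + 1) N).filter fun t => ∀ i, 1 ≤ t i,
        (t 0 : ℂ) ^ e * ∏ i : Fin k, (t i.succ : ℂ) ^ (β i + 1)
      = (∑ x ∈ Finset.range (N + 1), (x : ℂ) ^ e * Gfun k β (N - x))
          - (0 : ℂ) ^ e * Gfun k β N := by
  have step1 : ∑ t ∈ (Finset.Nat.antidiagonalTuple (k + 1) N).filter fun t => ∀ i, 1 ≤ t i,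
        (t 0 : ℂ) ^ e * ∏ i : Fin k, (t i.succ : ℂ) ^ (β i + 1)
      = ∑ t ∈ (Finset.Nat.antidiagonalTuple (k + 1) N).filter fun t => 1 ≤ t 0,
        (t 0 : ℂ) ^ e * ∏ i : Fin k, (t i.succ : ℂ) ^ (β i + 1) := by
    apply Finset.sum_subset
    · intro t ht
      simp only [Finset.mem_filter] at ht ⊢
      exact ⟨ht.1, ht.2 0⟩
    intro t ht hnt
    simp only [Finset.mem_filter] at ht hnt
    push_neg at hnt
    obtain ⟨i, hi⟩ := hnt ht.1
    have hi0 : t i = 0 := by omega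
    have hine : i ≠ 0 := by
      intro h; rw [h] at hi0; omega
    obtain ⟨j, rfl⟩ := Fin.eq_succ_of_ne_zero hine
    apply mul_eq_zero_of_right
    exact Finset.prod_eq_zero (Finset.mem_univ j) (by simp [hi0])
  have step2 : ∑ t ∈ (Finset.Nat.antidiagonalTuple (k + 1) N).filter fun t => 1 ≤ t 0,
        (t 0 : ℂ) ^ e * ∏ i : Fin k, (t i.succ : ℂ) ^ (β i + 1)
      = (∑ t ∈ Finset.Nat.antidiagonalTuple (k + 1) N,
          (t 0 : ℂ) ^ e * ∏ i : Fin k, (t i.succ : ℂ) ^ (β i + 1))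
        - ∑ t ∈ (Finset.Nat.antidiagonalTuple (k + 1) N).filter fun t => ¬ 1 ≤ t 0,
          (t 0 : ℂ) ^ e * ∏ i : Fin k, (t i.succ : ℂ) ^ (β i + 1) := by
    rw [eq_sub_iff_add_eq, Finset.sum_filter_add_sum_filter_not]
  have step3 : ∑ t ∈ Finset.Nat.antidiagonalTuple (k + 1) N,
        (t 0 : ℂ) ^ e * ∏ i : Fin k, (t i.succ : ℂ) ^ (β i + 1)
      = ∑ x ∈ Finset.range (N + 1), (x : ℂ) ^ e * Gfun k β (N - x) := by
    rw [sum_adt_succ (fun t => (t 0 : ℂ) ^ e * ∏ i : Fin k, (t i.succ : ℂ) ^ (β i + 1)),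
      Finset.Nat.sum_antidiagonal_eq_sum_range_succ
        (fun a b => ∑ s ∈ Finset.Nat.antidiagonalTuple k b,
          (((Fin.cons a s : Fin (k+1) → ℕ) 0 : ℂ)) ^ e *
            ∏ i : Fin k, (((Fin.cons a s : Fin (k+1) → ℕ) i.succ : ℂ)) ^ (β i + 1))]
    refine Finset.sum_congr rfl fun x _ => ?_
    simp only [Fin.cons_zero, Fin.cons_succ]
    rw [Gfun, Finset.mul_sum]
  have step4 : ∑ t ∈ (Finset.Nat.antidiagonalTuple (k + 1) N).filter fun t => ¬ 1 ≤ t 0,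
        (t 0 : ℂ) ^ e * ∏ i : Fin k, (t i.succ : ℂ) ^ (β i + 1)
      = (0 : ℂ) ^ e * Gfun k β N := by
    rw [Finset.sum_filter]
    rw [sum_adt_succ (fun t => if ¬ 1 ≤ t 0
      then (t 0 : ℂ) ^ e * ∏ i : Fin k, (t i.succ : ℂ) ^ (β i + 1) else 0)]
    have hstep : ∀ a b : ℕ, (∑ s ∈ Finset.Nat.antidiagonalTuple k b,
        if ¬ 1 ≤ (Fin.cons a s : Fin (k+1) → ℕ) 0
        then (((Fin.cons a s : Fin (k+1) → ℕ) 0 : ℕ) : ℂ) ^ e *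
          ∏ i : Fin k, (((Fin.cons a s : Fin (k+1) → ℕ) i.succ : ℕ) : ℂ) ^ (β i + 1) else 0)
        = if a = 0 then ((a : ℕ) : ℂ) ^ e * Gfun k β b else 0 := by
      intro a b
      simp only [Fin.cons_zero, Fin.cons_succ]
      by_cases ha : a = 0
      · subst ha
        simp [Gfun, Finset.mul_sum]
      · rw [if_neg ha]
        simp only [if_neg (show ¬¬1 ≤ a by omega), Finset.sum_const_zero]
    simp only [hstep]
    rw [Finset.Nat.sum_antidiagonal_eq_sum_range_succ
      (fun a b => if a = 0 then ((a : ℕ) : ℂ) ^ e * Gfun k β b else 0)]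
    rw [Finset.sum_eq_single 0 (fun x _ hx => if_neg hx)
      (fun h => absurd (Finset.mem_range.mpr (by omega)) h)]
    simp
  rw [step1, step2, step3, step4]

lemma Hfun_poly (k e : ℕ) (β : Fin (k + 1) → ℕ) :
    IsPolyFun (2 * (k + 1) + e + ∑ i, β i) (Hfun (k + 1) e β) := by
  have hG := Gfun_poly k β
  have h1 := conv (isPolyFun_pow e) hG
  have h2 := (h1.sub ((hG.constMul ((0:ℂ)^e)).mono (by omega))).add
    (((hG.constMul ((0:ℂ)^e)).constMul (1/2)).mono (by omega))
  refine (h2.mono (by omega)).congr fun N => ?_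
  rw [Hfun, F1_eq, filtered_eq_Gfun]


lemma prod_pow_elim {n k : ℕ} (m : Fin n ⊕ (Unit ⊕ Fin k) →₀ ℕ) (A : Fin n → ℂ) (v : ℂ)
    (B : Fin k → ℂ) :
    ∏ j, (Sum.elim A (Sum.elim (fun _ => v) B)) j ^ m j
      = (∏ i, A i ^ m (Sum.inl i)) *
        (v ^ m (Sum.inr (Sum.inl ())) * ∏ i, B i ^ m (Sum.inr (Sum.inr i))) := by
  rw [Fintype.prod_sum_type]
  congr 1
  rw [Fintype.prod_sum_type]
  congr 1
  simp

lemma totalDegree_eval₂_le {σ : Type*} (v : σ) (q : Polynomial ℂ) :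
    (Polynomial.eval₂ MvPolynomial.C (MvPolynomial.X v) q).totalDegree ≤ q.natDegree := by
  rw [Polynomial.eval₂_eq_sum_range]
  refine (MvPolynomial.totalDegree_finset_sum _ _).trans (Finset.sup_le fun i hi => ?_)
  refine (MvPolynomial.totalDegree_mul _ _).trans ?_
  have h1 : (MvPolynomial.C (q.coeff i) : MvPolynomial σ ℂ).totalDegree = 0 :=
    MvPolynomial.totalDegree_C _
  have h2 : ((MvPolynomial.X v : MvPolynomial σ ℂ) ^ i).totalDegree ≤ i :=
    (MvPolynomial.totalDegree_pow _ _).trans (by simp [MvPolynomial.totalDegree_X])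
  simp only [Finset.mem_range] at hi
  omega

end SsumAux

open SsumAux in
lemma Ssum_eq (n k : ℕ) (P : MvPolynomial (Fin n ⊕ (Unit ⊕ Fin k)) ℂ) (A : Fin n → ℂ)
    (N : ℕ) :
    Ssum n k P A N = ∑ m ∈ P.support, P.coeff m * (∏ i, A i ^ m (Sum.inl i)) *
      Hfun k (m (Sum.inr (Sum.inl ()))) (fun i => m (Sum.inr (Sum.inr i))) N := by
  have heval : ∀ (v : ℂ) (B : Fin k → ℂ),
      MvPolynomial.eval (Sum.elim A (Sum.elim (fun _ => v) B)) P
        = ∑ m ∈ P.support, P.coeff m * ((∏ i, A i ^ m (Sum.inl i)) *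
            (v ^ m (Sum.inr (Sum.inl ())) * ∏ i, B i ^ m (Sum.inr (Sum.inr i)))) := by
    intro v B
    rw [MvPolynomial.eval_eq']
    exact Finset.sum_congr rfl fun m _ => by rw [prod_pow_elim]
  have part1 : ∑ t ∈ (Finset.Nat.antidiagonalTuple (k + 1) N).filter fun t => ∀ i, 1 ≤ t i,
        MvPolynomial.eval
          (Sum.elim A (Sum.elim (fun _ => ((t 0 : ℂ))) fun i => ((t i.succ : ℂ)))) P *
          ∏ i : Fin k, (t i.succ : ℂ)
      = ∑ m ∈ P.support, P.coeff m * (∏ i, A i ^ m (Sum.inl i)) *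
          ∑ t ∈ (Finset.Nat.antidiagonalTuple (k + 1) N).filter fun t => ∀ i, 1 ≤ t i,
            (t 0 : ℂ) ^ m (Sum.inr (Sum.inl ())) *
              ∏ i : Fin k, (t i.succ : ℂ) ^ (m (Sum.inr (Sum.inr i)) + 1) := by
    calc _ = ∑ t ∈ (Finset.Nat.antidiagonalTuple (k + 1) N).filter fun t => ∀ i, 1 ≤ t i,
          ∑ m ∈ P.support, P.coeff m * (∏ i, A i ^ m (Sum.inl i)) *
            ((t 0 : ℂ) ^ m (Sum.inr (Sum.inl ())) *
              ∏ i : Fin k, (t i.succ : ℂ) ^ (m (Sum.inr (Sum.inr i)) + 1)) := by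
          refine Finset.sum_congr rfl fun t _ => ?_
          rw [heval, Finset.sum_mul]
          refine Finset.sum_congr rfl fun m _ => ?_
          have hp : (∏ i : Fin k, (t i.succ : ℂ) ^ (m (Sum.inr (Sum.inr i)))) *
              ∏ i : Fin k, (t i.succ : ℂ)
              = ∏ i : Fin k, (t i.succ : ℂ) ^ (m (Sum.inr (Sum.inr i)) + 1) := by
            rw [← Finset.prod_mul_distrib]
            exact Finset.prod_congr rfl fun i _ => (pow_succ _ _).symm
          rw [← hp]; ring
      _ = _ := by
          rw [Finset.sum_comm]
          exact Finset.sum_congr rfl fun m _ => by rw [Finset.mul_sum]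
  have part2 : ∑ t ∈ (Finset.Nat.antidiagonalTuple k N).filter fun t => ∀ i, 1 ≤ t i,
        MvPolynomial.eval (Sum.elim A (Sum.elim (fun _ => (0 : ℂ)) fun i => ((t i : ℂ)))) P *
          ∏ i : Fin k, (t i : ℂ)
      = ∑ m ∈ P.support, P.coeff m * (∏ i, A i ^ m (Sum.inl i)) *
          ((0 : ℂ) ^ m (Sum.inr (Sum.inl ())) *
            ∑ t ∈ (Finset.Nat.antidiagonalTuple k N).filter fun t => ∀ i, 1 ≤ t i,
              ∏ i : Fin k, (t i : ℂ) ^ (m (Sum.inr (Sum.inr i)) + 1)) := by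
    calc _ = ∑ t ∈ (Finset.Nat.antidiagonalTuple k N).filter fun t => ∀ i, 1 ≤ t i,
          ∑ m ∈ P.support, P.coeff m * (∏ i, A i ^ m (Sum.inl i)) *
            ((0 : ℂ) ^ m (Sum.inr (Sum.inl ())) *
              ∏ i : Fin k, (t i : ℂ) ^ (m (Sum.inr (Sum.inr i)) + 1)) := by
          refine Finset.sum_congr rfl fun t _ => ?_
          rw [heval, Finset.sum_mul]
          refine Finset.sum_congr rfl fun m _ => ?_
          have hp : (∏ i : Fin k, (t i : ℂ) ^ (m (Sum.inr (Sum.inr i)))) *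
              ∏ i : Fin k, (t i : ℂ)
              = ∏ i : Fin k, (t i : ℂ) ^ (m (Sum.inr (Sum.inr i)) + 1) := by
            rw [← Finset.prod_mul_distrib]
            exact Finset.prod_congr rfl fun i _ => (pow_succ _ _).symm
          rw [← hp]; ring
      _ = _ := by
          rw [Finset.sum_comm]
          refine Finset.sum_congr rfl fun m _ => ?_
          rw [Finset.mul_sum, Finset.mul_sum]
  rw [Ssum, part1, part2, Finset.mul_sum, ← Finset.sum_add_distrib]
  refine Finset.sum_congr rfl fun m _ => ?_
  rw [Hfun]
  ring


/-- `S_{b,B}[P](A,0) = 0`, and `S_{b,B}[P](A,N)` agrees with a polynomial in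
`a₁,...,aₙ,N` of (total) degree at most `2k + deg P`. -/
theorem Ssum_vanishes_and_polynomial (n k : ℕ) (hk : 1 ≤ k)
    (P : MvPolynomial (Fin n ⊕ (Unit ⊕ Fin k)) ℂ) :
    (∀ A : Fin n → ℂ, Ssum n k P A 0 = 0) ∧
    ∃ Q : MvPolynomial (Fin n ⊕ Unit) ℂ,
      Q.totalDegree ≤ 2 * k + P.totalDegree ∧
      ∀ (A : Fin n → ℂ) (N : ℕ),
        MvPolynomial.eval (Sum.elim A fun _ => (N : ℂ)) Q = Ssum n k P A N := by
  constructor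
  · intro A
    rw [Ssum]
    have h1 : ((Finset.Nat.antidiagonalTuple (k + 1) 0).filter fun t => ∀ i, 1 ≤ t i) = ∅ := by
      rw [Finset.Nat.antidiagonalTuple_zero_right]
      ext t
      simp only [Finset.mem_filter, Finset.mem_singleton, Finset.notMem_empty, iff_false,
        not_and]
      rintro rfl h
      exact absurd (h 0) (by simp)
    have h2 : ((Finset.Nat.antidiagonalTuple k 0).filter fun t => ∀ i, 1 ≤ t i) = ∅ := by
      rw [Finset.Nat.antidiagonalTuple_zero_right]
      ext t
      simp only [Finset.mem_filter, Finset.mem_singleton, Finset.notMem_empty, iff_false,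
        not_and]
      rintro rfl h
      exact absurd (h ⟨0, by omega⟩) (by simp)
    rw [h1, h2]
    simp
  · obtain ⟨k', rfl⟩ : ∃ k', k = k' + 1 := ⟨k - 1, by omega⟩
    classical
    have key : ∀ m : Fin n ⊕ (Unit ⊕ Fin (k' + 1)) →₀ ℕ,
        SsumAux.IsPolyFun
          (2 * (k' + 1) + m (Sum.inr (Sum.inl ())) + ∑ i, m (Sum.inr (Sum.inr i)))
          (SsumAux.Hfun (k' + 1) (m (Sum.inr (Sum.inl ())))
            (fun i => m (Sum.inr (Sum.inr i)))) :=
      fun m => SsumAux.Hfun_poly k' _ _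
    choose q hq1 hq2 using key
    refine ⟨∑ m ∈ P.support, MvPolynomial.C (P.coeff m) *
      ((∏ i, (MvPolynomial.X (Sum.inl i) : MvPolynomial (Fin n ⊕ Unit) ℂ) ^ m (Sum.inl i)) *
        Polynomial.eval₂ MvPolynomial.C (MvPolynomial.X (Sum.inr ())) (q m)), ?_, ?_⟩
    · refine (MvPolynomial.totalDegree_finset_sum _ _).trans (Finset.sup_le fun m hm => ?_)
      refine (MvPolynomial.totalDegree_mul _ _).trans ?_
      have hC : (MvPolynomial.C (P.coeff m) : MvPolynomial (Fin n ⊕ Unit) ℂ).totalDegree = 0 :=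
        MvPolynomial.totalDegree_C _
      have hprod : (∏ i, (MvPolynomial.X (Sum.inl i) :
          MvPolynomial (Fin n ⊕ Unit) ℂ) ^ m (Sum.inl i)).totalDegree
          ≤ ∑ i, m (Sum.inl i) := by
        refine (MvPolynomial.totalDegree_finset_prod _ _).trans ?_
        refine Finset.sum_le_sum fun i _ => ?_
        exact (MvPolynomial.totalDegree_pow _ _).trans (by simp [MvPolynomial.totalDegree_X])
      have hE := SsumAux.totalDegree_eval₂_le (Sum.inr () : Fin n ⊕ Unit) (q m)
      have hmul := MvPolynomial.totalDegree_mul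
        (∏ i, (MvPolynomial.X (Sum.inl i) : MvPolynomial (Fin n ⊕ Unit) ℂ) ^ m (Sum.inl i))
        (Polynomial.eval₂ MvPolynomial.C (MvPolynomial.X (Sum.inr ())) (q m))
      have hdeg : ∑ i, m (Sum.inl i) + (m (Sum.inr (Sum.inl ()))
          + ∑ i, m (Sum.inr (Sum.inr i))) ≤ P.totalDegree := by
        have h := MvPolynomial.le_totalDegree hm
        rw [Finsupp.sum_fintype _ _ (fun _ => rfl), Fintype.sum_sum_type,
          Fintype.sum_sum_type] at h
        simpa using h
      have hq := hq1 m
      omega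
    · intro A N
      rw [map_sum, Ssum_eq]
      refine Finset.sum_congr rfl fun m hm => ?_
      rw [map_mul, map_mul, MvPolynomial.eval_C, map_prod]
      have hE : MvPolynomial.eval (Sum.elim A fun _ => (N : ℂ))
          (Polynomial.eval₂ MvPolynomial.C (MvPolynomial.X (Sum.inr ())) (q m))
          = (q m).eval ((N : ℕ) : ℂ) := by
        rw [Polynomial.hom_eval₂]
        have hid : (MvPolynomial.eval (Sum.elim A fun _ => (N : ℂ))).comp
            (MvPolynomial.C : ℂ →+* MvPolynomial (Fin n ⊕ Unit) ℂ) = RingHom.id ℂ := by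
          ext x; simp
        rw [hid, MvPolynomial.eval_X]
        rfl
      rw [hE, hq2 m N]
      simp only [map_pow, MvPolynomial.eval_X, Sum.elim_inl]
      ring
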